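/- Let F be a finite group of linear isometries of ℝⁿ (a finite subgroup of O(n)). Define E₀ = {y ∈ ℝⁿ : fy = y for all f ∈ F} and E₁ = {y ∈ ℝⁿ : fy = ±y for all f ∈ F, and fy = −y for at least one f ∈ F}. If l is a line in ℝⁿ with Fl = l (F leaves l invariant as a set), then l ∩ E₀ ≠ ∅, and either l ⊆ E₀, or l ∩ E₀ = {y} is a single point and l ⊆ E₁ + y. -/
import Mathlib


noncomputable section

/-- Euclidean `n`-space. -/
abbrev E (n : ℕ) := EuclideanSpace ℝ (Fin n)

/-- The isometry group of Euclidean `n`-space (which equals `O(n) ⋉ ℝⁿ`). -/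
abbrev Isom (n : ℕ) := E n ≃ᵢ E n

/-- A subgroup of the isometry group of `ℝⁿ` is `n`-crystallographic if its action on `ℝⁿ`
is properly discontinuous and cocompact. -/
def IsCrystallographic {n : ℕ} (Γ : Subgroup (Isom n)) : Prop :=
  (∀ K L : Set (E n), IsCompact K → IsCompact L →
      {γ : Isom n | γ ∈ Γ ∧ (γ '' K ∩ L).Nonempty}.Finite) ∧
  ∃ K : Set (E n), IsCompact K ∧ ∀ x : E n, ∃ γ ∈ Γ, γ x ∈ K

/-- A line in `ℝⁿ`: a one-dimensional affine subspace. -/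
def IsLine {n : ℕ} (l : Set (E n)) : Prop :=
  ∃ p v : E n, v ≠ 0 ∧ l = {x | ∃ t : ℝ, x = p + t • v}

/-- A group is virtually infinite cyclic if it contains an infinite cyclic subgroup of
finite index. -/
def IsVirtuallyInfiniteCyclic (G : Type*) [Group G] : Prop :=
  ∃ H : Subgroup G, H.FiniteIndex ∧ Nonempty (H ≃* Multiplicative ℤ)

/-- Claim 2 in the proof of Theorem 2.1. Let `F` be a finite subgroup of
`O(n)`, `E₀` its fixed subspace and `E₁` the set of vectors `y` with `fy = ±y` for all `f ∈ F`
and `fy = -y` for some `f ∈ F`.  If `l` is a line with `Fl = l`, then `l ∩ E₀ ≠ ∅` and either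
`l ⊆ E₀`, or `l ∩ E₀` is a single point `{y}` and `l ⊆ E₁ + y`. -/
theorem invariant_line_of_finite_orthogonal {n : ℕ}
    (F : Subgroup (E n ≃ₗᵢ[ℝ] E n)) (hF : (F : Set (E n ≃ₗᵢ[ℝ] E n)).Finite)
    (E₀ E₁ : Set (E n))
    (hE₀ : E₀ = {y : E n | ∀ f ∈ F, f y = y})
    (hE₁ : E₁ = {y : E n | (∀ f ∈ F, f y = y ∨ f y = -y) ∧ ∃ f ∈ F, f y = -y})
    (l : Set (E n)) (hl : IsLine l) (hinv : ∀ f ∈ F, f '' l = l) :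
    (l ∩ E₀).Nonempty ∧
      (l ⊆ E₀ ∨ ∃ y : E n, l ∩ E₀ = {y} ∧ l ⊆ (fun e => e + y) '' E₁) := by
  classical
  obtain ⟨p, v, hv, hlv⟩ := hl
  have hvn : ‖v‖ ≠ 0 := norm_ne_zero_iff.mpr hv
  have hpl : p ∈ l := by rw [hlv]; exact ⟨0, by simp⟩
  have hmem : ∀ f ∈ F, ∀ x ∈ l, f x ∈ l := by
    intro f hf x hx
    rw [← hinv f hf]; exact ⟨x, hx, rfl⟩
  have hpar : ∀ f ∈ F, ∃ t : ℝ, f p = p + t • v := by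
    intro f hf
    have := hmem f hf p hpl
    rwa [hlv] at this
  have hdir : ∀ f ∈ F, f v = v ∨ f v = -v := by
    intro f hf
    obtain ⟨a, ha⟩ := hpar f hf
    have hpv : (p + v) ∈ l := by rw [hlv]; exact ⟨1, by simp⟩
    obtain ⟨b, hb⟩ : ∃ b : ℝ, f (p + v) = p + b • v := by
      have := hmem f hf (p + v) hpv; rwa [hlv] at this
    have hfv : f v = (b - a) • v := by
      have h := map_add f p v
      rw [ha, hb, add_assoc] at h
      have h2 := add_left_cancel h
      rw [sub_smul, eq_sub_iff_add_eq, add_comm]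
      exact h2.symm
    have hnorm : ‖f v‖ = ‖v‖ := f.norm_map v
    rw [hfv, norm_smul, Real.norm_eq_abs] at hnorm
    have habs : |b - a| = 1 :=
      mul_right_cancel₀ hvn (hnorm.trans (one_mul ‖v‖).symm)
    rcases (abs_eq (by norm_num : (0:ℝ) ≤ 1)).mp habs with h | h
    · left; rw [hfv, h, one_smul]
    · right; rw [hfv, h, neg_smul, one_smul]
  set S := hF.toFinset with hS
  have hSm : ∀ f, f ∈ S ↔ f ∈ F := fun f => hF.mem_toFinset
  have hS1 : (1 : E n ≃ₗᵢ[ℝ] E n) ∈ S := (hSm 1).mpr F.one_mem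
  have hk : 0 < S.card := Finset.card_pos.mpr ⟨1, hS1⟩
  have hk0 : (S.card : ℝ) ≠ 0 := Nat.cast_ne_zero.mpr hk.ne'
  set T : (E n ≃ₗᵢ[ℝ] E n) → ℝ := fun f => if h : f ∈ F then (hpar f h).choose else 0
    with hTdef
  have hTspec : ∀ f ∈ F, f p = p + T f • v := by
    intro f hf; simp only [hTdef, dif_pos hf]; exact (hpar f hf).choose_spec
  set s : ℝ := (∑ f ∈ S, T f) / S.card with hsdef
  set y : E n := p + s • v with hydef
  have hyl : y ∈ l := by rw [hlv]; exact ⟨s, rfl⟩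
  have hsum : (S.card : ℝ) • y = ∑ f ∈ S, f p := by
    have h1 : ∑ f ∈ S, (f p : E n) = ∑ f ∈ S, (p + T f • v) :=
      Finset.sum_congr rfl fun f hf => hTspec f ((hSm f).mp hf)
    rw [h1, Finset.sum_add_distrib, Finset.sum_const, ← Finset.sum_smul, hydef,
      smul_add, smul_smul, hsdef]
    congr 1
    · exact ((Nat.cast_smul_eq_nsmul ℝ _ _).symm).symm
    · congr 1
      field_simp
  have hyE : ∀ g ∈ F, g y = y := by
    intro g hg
    have h1 : (S.card : ℝ) • g y = ∑ f ∈ S, g (f p) := by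
      rw [← map_smul, hsum, map_sum]
    have h2 : ∑ f ∈ S, g (f p) = ∑ f ∈ S, f p := by
      refine Finset.sum_equiv (Equiv.mulLeft g) (fun i => ?_) (fun i _ => rfl)
      simp only [hSm, Equiv.coe_mulLeft]
      constructor
      · exact fun hi => F.mul_mem hg hi
      · intro hi
        have := F.mul_mem (F.inv_mem hg) hi
        rwa [inv_mul_cancel_left] at this
    have h3 : (S.card : ℝ) • g y = (S.card : ℝ) • y := by
      rw [h1, h2, hsum]
    exact smul_right_injective (E n) hk0 h3
  have hly : ∀ x ∈ l, ∃ t : ℝ, x = y + t • v := by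
    intro x hx
    rw [hlv] at hx; obtain ⟨t, rfl⟩ := hx
    exact ⟨t - s, by rw [hydef, sub_smul]; abel⟩
  refine ⟨⟨y, hyl, by rw [hE₀]; exact hyE⟩, ?_⟩
  by_cases hc : ∀ f ∈ F, f v = v
  · left
    intro x hx
    obtain ⟨t, rfl⟩ := hly x hx
    rw [hE₀]
    intro f hf
    rw [map_add, map_smul, hyE f hf, hc f hf]
  · right
    push_neg at hc
    obtain ⟨f₀, hf₀F, hf₀⟩ := hc
    have hf₀v : f₀ v = -v := (hdir f₀ hf₀F).resolve_left hf₀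
    refine ⟨y, ?_, ?_⟩
    · apply Set.eq_singleton_iff_unique_mem.mpr
      refine ⟨⟨hyl, by rw [hE₀]; exact hyE⟩, ?_⟩
      rintro x ⟨hxl, hxE⟩
      obtain ⟨t, rfl⟩ := hly x hxl
      rw [hE₀] at hxE
      have h1 := hxE f₀ hf₀F
      rw [map_add, map_smul, hyE f₀ hf₀F, hf₀v, smul_neg] at h1
      have h2 : -(t • v) = t • v := add_left_cancel h1
      have h4 : t • v + t • v = 0 := neg_eq_iff_add_eq_zero.mp h2
      have h5 : (2 : ℝ) • (t • v) = 0 := by rw [two_smul]; exact h4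
      have h3 : t • v = 0 := by
        rcases smul_eq_zero.mp h5 with h | h
        · norm_num at h
        · exact h
      rw [h3, add_zero]
    · intro x hx
      obtain ⟨t, rfl⟩ := hly x hx
      refine ⟨t • v, ?_, add_comm _ _⟩
      rw [hE₁]
      refine ⟨fun f hf => ?_, f₀, hf₀F, by rw [map_smul, hf₀v, smul_neg]⟩
      rcases hdir f hf with h | h
      · left; rw [map_smul, h]
      · right; rw [map_smul, h, smul_neg]
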